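/- Let f be a strongly polar homogeneous mixed polynomial with polar degree d_p whose Milnor fiber monodromy h : F → F generates a free ℤ/d_p action with χ(F) divisible by d_p. Then the zeta function of the monodromy is ζ(t) = (1 − t^{d_p})^{−χ(F)/d_p}. In particular, if d_p = 1 then h = id_F and ζ(t) = (1 − t)^{−χ(F)}. -/

import Mathlib

set_option maxHeartbeats 1000000
set_option synthInstance.maxHeartbeats 400000

section ZetaAux
open Polynomial Matrix

lemma eq_of_cross_deriv (P Q : Polynomial ℚ) (hP0 : P.coeff 0 = 1) (hQ0 : Q.coeff 0 = 1)
    (h : derivative P * Q = P * derivative Q) : P = Q := by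
  ext n
  induction n using Nat.strong_induction_on with
  | _ n ih =>
    match n with
    | 0 => rw [hP0, hQ0]
    | Nat.succ n =>
      have key := congrArg (fun p => Polynomial.coeff p n) h
      simp only [Polynomial.coeff_mul, Finset.Nat.sum_antidiagonal_eq_sum_range_succ_mk,
        coeff_derivative] at key
      have hrhs : ∑ x ∈ Finset.range (n+1), P.coeff x * (Q.coeff (n - x + 1) * ((↑(n - x) : ℚ) + 1))
          = ∑ x ∈ Finset.range (n+1), Q.coeff (n - x) * (Q.coeff (x + 1) * ((x : ℚ) + 1)) := by
        have h1 : ∑ x ∈ Finset.range (n+1), P.coeff x * (Q.coeff (n - x + 1) * ((↑(n - x) : ℚ) + 1))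
            = ∑ x ∈ Finset.range (n+1),
              (fun i => Q.coeff i * (Q.coeff (n - i + 1) * ((↑(n - i) : ℚ) + 1))) x :=
          Finset.sum_congr rfl fun x hx =>
            by rw [ih x (Finset.mem_range.mp hx)]
        rw [h1, ← Finset.sum_range_reflect
          (fun i => Q.coeff i * (Q.coeff (n - i + 1) * ((↑(n - i) : ℚ) + 1))) (n+1)]
        refine Finset.sum_congr rfl fun x hx => ?_
        have hxn : x ≤ n := Nat.lt_succ_iff.mp (Finset.mem_range.mp hx)
        simp only [Nat.add_sub_cancel, Nat.sub_sub_self hxn]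
      rw [hrhs] at key
      have key2 : ∑ x ∈ Finset.range (n+1),
          (((x:ℚ) + 1) * Q.coeff (n - x) * (P.coeff (x + 1) - Q.coeff (x + 1))) = 0 := by
        have heq : ∑ x ∈ Finset.range (n+1),
            (((x:ℚ) + 1) * Q.coeff (n - x) * (P.coeff (x + 1) - Q.coeff (x + 1)))
            = (∑ x ∈ Finset.range (n+1), P.coeff (x + 1) * ((x:ℚ) + 1) * Q.coeff (n - x))
              - ∑ x ∈ Finset.range (n+1), Q.coeff (n - x) * (Q.coeff (x + 1) * ((x:ℚ) + 1)) := by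
          rw [← Finset.sum_sub_distrib]
          exact Finset.sum_congr rfl fun x _ => by ring
        rw [heq, key, sub_self]
      have key3 := Finset.sum_eq_single_of_mem
        (f := fun (x : ℕ) => ((x:ℚ) + 1) * Q.coeff (n - x) * (P.coeff (x + 1) - Q.coeff (x + 1)))
        n (Finset.self_mem_range_succ n)
        (by
          intro b hb hbn
          have hb' : b + 1 < n.succ := by
            have := Finset.mem_range.mp hb; omega
          simp only [ih (b+1) hb', sub_self, mul_zero])
      rw [key2] at key3
      simp only [Nat.sub_self, hQ0, mul_one] at key3
      replace key3 := key3.symm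
      have hne : ((n:ℚ) + 1) ≠ 0 := by positivity
      have h5 := (mul_eq_zero.mp key3).resolve_left hne
      have h6 := sub_eq_zero.mp h5
      simpa using h6

noncomputable section
local notation "K" => RatFunc ℚ
set_option maxHeartbeats 1000000
set_option synthInstance.maxHeartbeats 400000

lemma key_det_deriv {n d : ℕ} (hd : 0 < d) (M : Matrix (Fin n) (Fin n) ℚ) (hM : M ^ d = 1) :
    (1 - X ^ d : ℚ[X]) * derivative (det (1 - M.map fun a => X * C a)) =
      -(det (1 - M.map fun a => X * C a) * ∑ k ∈ Finset.range d, C ((M ^ (k+1)).trace) * X ^ k) := by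
  classical
  set σ : ℚ →+* K := algebraMap ℚ K with hσ
  set φ : ℚ[X] →+* K := (algebraMap ℚ[X] K : ℚ[X] →+* K) with hφ
  set u : K := RatFunc.X with hu
  -- evaluation of mapped polynomials at u is φ
  have evφ : ∀ p : ℚ[X], (p.map σ).eval u = φ p := by
    intro p
    have : (Polynomial.evalRingHom u).comp (Polynomial.mapRingHom σ) = φ := by
      apply Polynomial.ringHom_ext
      · intro a
        simp [σ, φ]
      · simp [φ, u]
    calc (p.map σ).eval u = ((Polynomial.evalRingHom u).comp (Polynomial.mapRingHom σ)) p := rfl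
    _ = φ p := by rw [this]
  have hφinj : Function.Injective φ := RatFunc.algebraMap_injective ℚ
  set MK : Matrix (Fin n) (Fin n) K := M.map σ with hMK
  have hMKd : MK ^ d = 1 := by
    have h1 : MK = σ.mapMatrix M := rfl
    rw [h1, ← map_pow, hM, _root_.map_one]
  have hGu : (1 : K) - u ^ d = φ (1 - X ^ d) := by simp [φ, u]
  have hGne : (1 : K) - u ^ d ≠ 0 := by
    rw [hGu]
    intro h
    have := hφinj (h.trans (map_zero φ).symm)
    have h0 := congrArg (fun p => Polynomial.coeff p 0) this
    simp [coeff_one, coeff_X_pow, (hd.ne : 0 ≠ d)] at h0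
  -- geometric sum inverse
  set S : Matrix (Fin n) (Fin n) K := ∑ k ∈ Finset.range d, u ^ k • MK ^ k with hS
  have hgeom : (1 - u • MK) * S = ((1:K) - u ^ d) • 1 := by
    have hx : ∀ k : ℕ, (u • MK) ^ k = u ^ k • MK ^ k := fun k => smul_pow u MK k
    have : (1 - u • MK) * S = -(((u • MK) - 1) * ∑ k ∈ Finset.range d, (u • MK) ^ k) := by
      rw [hS]
      simp_rw [hx]
      rw [← neg_mul, neg_sub]
    rw [this, mul_geom_sum, hx, hMKd, neg_sub, sub_smul, one_smul]
  set Binv : Matrix (Fin n) (Fin n) K := ((1:K) - u ^ d)⁻¹ • S with hBinvdef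
  have hBinv : (1 - u • MK) * Binv = 1 := by
    rw [hBinvdef, mul_smul_comm, hgeom, smul_smul, inv_mul_cancel₀ hGne, one_smul]
  set ψ : ℚ[X] →+* Polynomial K :=
    Polynomial.eval₂RingHom (Polynomial.C.comp σ) (Polynomial.X + Polynomial.C u) with hψdef
  have hψ : ∀ p : ℚ[X], ψ p = Polynomial.taylor u (p.map σ) := by
    intro p
    rw [taylor_apply, Polynomial.comp, eval₂_map]
    rfl
  set A : Matrix (Fin n) (Fin n) ℚ[X] := 1 - M.map (fun a => X * C a) with hA
  have hAmap : A.map ψ = (1 : Matrix (Fin n) (Fin n) (Polynomial K))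
      - (Polynomial.C u) • MK.map Polynomial.C - (Polynomial.X : Polynomial K) • MK.map Polynomial.C := by
    ext i j
    simp only [hA, Matrix.map_apply, Matrix.sub_apply, Matrix.one_apply, Matrix.smul_apply,
      hMK, map_sub ψ, apply_ite ψ, _root_.map_one, _root_.map_zero, hψdef,
      coe_eval₂RingHom, eval₂_mul, eval₂_X, eval₂_C, RingHom.comp_apply, smul_eq_mul]
    by_cases h : i = j <;> simp [h] <;> try ring
  have hfact : A.map ψ = ((1 - u • MK).map Polynomial.C) *
      (1 - (Polynomial.X : Polynomial K) • ((Binv * MK).map Polynomial.C)) := by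
    rw [hAmap, Matrix.mul_sub, mul_one, Matrix.mul_smul, ← Matrix.map_mul, ← mul_assoc, hBinv,
      one_mul]
    ext i j
    simp only [Matrix.map_apply, Matrix.sub_apply, Matrix.one_apply, Matrix.smul_apply,
      smul_eq_mul, apply_ite Polynomial.C, _root_.map_one, _root_.map_zero, map_sub, _root_.map_mul]
  have h1add : (1 : Matrix (Fin n) (Fin n) (Polynomial K))
      - (Polynomial.X : Polynomial K) • ((Binv * MK).map Polynomial.C)
      = 1 + (Polynomial.X : Polynomial K) • ((-(Binv * MK)).map Polynomial.C) := by
    ext i j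
    simp only [Matrix.add_apply, Matrix.sub_apply, Matrix.smul_apply, Matrix.map_apply,
      Matrix.neg_apply, map_neg, smul_eq_mul]
    ring
  have hdet : ψ (det A) = Polynomial.C (det (1 - u • MK)) *
      det (1 + (Polynomial.X : Polynomial K) • ((-(Binv * MK)).map Polynomial.C)) := by
    rw [RingHom.map_det ψ A, RingHom.mapMatrix_apply, hfact, det_mul, h1add,
      ← RingHom.mapMatrix_apply, ← RingHom.map_det]
  have hc0 : (det (1 + (Polynomial.X : Polynomial K) • ((-(Binv * MK)).map Polynomial.C))).coeff 0
      = 1 := by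
    rw [Polynomial.coeff_zero_eq_eval_zero]
    have := eval_det_add_X_smul (1 : Matrix (Fin n) (Fin n) (Polynomial K)) (-(Binv * MK))
    rw [this, det_one, eval_one]
  have hc1 : (det (1 + (Polynomial.X : Polynomial K) • ((-(Binv * MK)).map Polynomial.C))).coeff 1
      = trace (-(Binv * MK)) := Matrix.coeff_det_one_add_X_smul_one _
  have hD0 : φ (det A) = det (1 - u • MK) := by
    have h := congrArg (fun q => Polynomial.coeff q 0) hdet
    simp only [hψ, taylor_coeff_zero, evφ, coeff_C_mul, hc0, mul_one] at h
    exact h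
  have hD1 : φ (derivative (det A)) = det (1 - u • MK) * trace (-(Binv * MK)) := by
    have h := congrArg (fun q => Polynomial.coeff q 1) hdet
    simp only [hψ, taylor_coeff_one, derivative_map, evφ, coeff_C_mul, hc1] at h
    exact h
  have htrmap : ∀ (B : Matrix (Fin n) (Fin n) ℚ), trace (B.map σ) = σ (trace B) := by
    intro B
    simp [Matrix.trace, Matrix.diag, Matrix.map_apply, map_sum]
  have hMKpow : ∀ k : ℕ, MK ^ k = (M ^ k).map σ := by
    intro k
    have h1 : MK = σ.mapMatrix M := rfl
    rw [h1, ← map_pow]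
    rfl
  have htr : trace (Binv * MK) = ((1:K) - u ^ d)⁻¹ *
      ∑ k ∈ Finset.range d, u ^ k * σ ((M ^ (k+1)).trace) := by
    rw [hBinvdef, smul_mul_assoc, trace_smul, hS, Finset.sum_mul, smul_eq_mul]
    congr 1
    rw [trace_sum]
    refine Finset.sum_congr rfl fun k _ => ?_
    rw [smul_mul_assoc, trace_smul, ← pow_succ, hMKpow, htrmap, smul_eq_mul]
  apply hφinj
  rw [_root_.map_mul, map_neg, _root_.map_mul, hD1, hD0, ← hGu]
  have hφT : φ (∑ k ∈ Finset.range d, C ((M ^ (k+1)).trace) * X ^ k)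
      = ∑ k ∈ Finset.range d, σ ((M ^ (k+1)).trace) * u ^ k := by
    rw [map_sum]
    refine Finset.sum_congr rfl fun k _ => ?_
    rw [_root_.map_mul, map_pow]
    simp [φ, σ, u]
  rw [hφT, trace_neg, htr]
  have hsum : ∑ k ∈ Finset.range d, σ ((M ^ (k+1)).trace) * u ^ k
      = ∑ k ∈ Finset.range d, u ^ k * σ ((M ^ (k+1)).trace) :=
    Finset.sum_congr rfl fun k _ => mul_comm _ _
  rw [hsum]
  field_simp

lemma trace_idem_nat {n : ℕ} (P : Matrix (Fin n) (Fin n) ℚ) (hP : P * P = P) :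
    ∃ r : ℕ, P.trace = r := by
  classical
  set f := Matrix.toLin' P with hf
  have hff : f ∘ₗ f = f := by
    rw [hf, ← Matrix.toLin'_mul, hP]
  obtain ⟨p, hp⟩ := (LinearMap.isProj_iff_isIdempotentElem f).mpr hff
  refine ⟨Module.finrank ℚ p, ?_⟩
  have htr := hp.trace
  have h2 : LinearMap.trace ℚ _ f = Matrix.trace P := by
    rw [LinearMap.trace_eq_matrix_trace ℚ (Pi.basisFun ℚ (Fin n)) f, hf]
    rw [LinearMap.toMatrix_eq_toMatrix', LinearMap.toMatrix'_toLin']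
  rw [← h2, htr]

lemma deriv_prod_rel {ι : Type*} [DecidableEq ι] (s : Finset ι) (G : ℚ[X]) (D T : ι → ℚ[X])
    (h : ∀ i ∈ s, G * derivative (D i) = -(D i * T i)) :
    G * derivative (∏ i ∈ s, D i) = -((∏ i ∈ s, D i) * ∑ i ∈ s, T i) := by
  induction s using Finset.induction with
  | empty => simp
  | @insert a s ha ih =>
    rw [Finset.prod_insert ha, Finset.sum_insert ha, derivative_mul]
    have h1 := h a (Finset.mem_insert_self a s)
    have h2 := ih (fun i hi => h i (Finset.mem_insert_of_mem hi))
    calc G * (derivative (D a) * ∏ i ∈ s, D i + D a * derivative (∏ i ∈ s, D i))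
        = (G * derivative (D a)) * ∏ i ∈ s, D i + D a * (G * derivative (∏ i ∈ s, D i)) := by ring
      _ = (-(D a * T a)) * ∏ i ∈ s, D i + D a * (-((∏ i ∈ s, D i) * ∑ i ∈ s, T i)) := by
          rw [h1, h2]
      _ = -((D a * ∏ i ∈ s, D i) * (T a + ∑ i ∈ s, T i)) := by ring


end
end ZetaAux

open Matrix RatFunc

open scoped Polynomial in
/-- zeta function of a periodic monodromy. Model: the rational homology of
the Milnor fiber `F` is a graded family of `ℚ`-vector spaces of dimensions `m j`, on which
the monodromy `h` acts by matrices `M j` with `(M j)^d = 1` (periodicity, `d = d_p`).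
The hypothesis that `h` generates a free `ℤ/d`-action is encoded by the vanishing of the
Lefschetz numbers of the intermediate iterates `h^k`, `0 < k < d`, while the Lefschetz
number of the identity is `χ(F) = ∑ (-1)^j m j = χ`.  Then the zeta function
`ζ(t) = ∏_j det(1 - t h_{*,j})^{(-1)^{j+1}}` equals `(1 - t^d)^{-χ/d}`.
In particular if `d = 1` then `h_* = id` (so `h ≃ id_F` on homology). -/
theorem zeta_function_of_periodic_monodromy
    (N d : ℕ) (hd : 0 < d) (χ : ℤ)
    (m : Fin N → ℕ) (M : ∀ j, Matrix (Fin (m j)) (Fin (m j)) ℚ)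
    (hper : ∀ j, (M j) ^ d = 1)
    (hlef : ∀ k, 0 < k → k < d → ∑ j : Fin N, (-1 : ℚ) ^ (j : ℕ) * ((M j) ^ k).trace = 0)
    (hchi : ∑ j : Fin N, (-1 : ℤ) ^ (j : ℕ) * (m j : ℤ) = χ) :
    (∏ j : Fin N, (Matrix.det (1 - (M j).map (fun a => (RatFunc.X : RatFunc ℚ) * algebraMap ℚ (RatFunc ℚ) a))) ^ ((-1 : ℤ) ^ ((j : ℕ) + 1)))
      = (1 - (RatFunc.X : RatFunc ℚ) ^ d) ^ (-(χ / d)) ∧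
    (d = 1 → ∀ j, M j = 1) := by
  classical
  constructor
  swap
  · intro h1 j
    have := hper j
    rwa [h1, pow_one] at this
  have hdQ : (d : ℚ) ≠ 0 := Nat.cast_ne_zero.mpr hd.ne'
  set G : ℚ[X] := 1 - Polynomial.X ^ d with hGdef
  set D : (j : Fin N) → ℚ[X] := fun j =>
    Matrix.det (1 - (M j).map fun a => Polynomial.X * Polynomial.C a) with hDdef
  set T : (j : Fin N) → ℚ[X] := fun j =>
    ∑ k ∈ Finset.range d, Polynomial.C (((M j) ^ (k+1)).trace) * Polynomial.X ^ k with hTdef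
  have hkey : ∀ j, G * Polynomial.derivative (D j) = -(D j * T j) :=
    fun j => key_det_deriv hd (M j) (hper j)
  have htr1 : ∀ j, ((M j) ^ d).trace = (m j : ℚ) := by
    intro j
    rw [hper j, Matrix.trace_one]
    simp
  have hLd : ∑ j : Fin N, (-1 : ℚ) ^ (j : ℕ) * ((M j) ^ d).trace = (χ : ℚ) := by
    simp_rw [htr1]
    exact_mod_cast congrArg (fun x : ℤ => (x : ℚ)) hchi
  -- divisibility of χ by d
  obtain ⟨r, hr⟩ : ∃ r : Fin N → ℕ,
      ∀ j, ((d:ℚ)⁻¹ • ∑ k ∈ Finset.range d, (M j) ^ k).trace = r j := by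
    have key : ∀ j, ∃ rr : ℕ, ((d:ℚ)⁻¹ • ∑ k ∈ Finset.range d, (M j) ^ k).trace = rr := by
      intro j
      apply trace_idem_nat
      set Q := ∑ k ∈ Finset.range d, (M j) ^ k with hQ
      have hMQ : (M j) * Q = Q := by
        rw [hQ, Finset.mul_sum]
        have e0 : ∑ k ∈ Finset.range d, (M j) * (M j) ^ k
            = ∑ k ∈ Finset.range d, (M j) ^ (k+1) :=
          Finset.sum_congr rfl fun k _ => (pow_succ' (M j) k).symm
        have e1 : ∑ k ∈ Finset.range (d+1), (M j) ^ k
            = (∑ k ∈ Finset.range d, (M j) ^ (k+1)) + 1 := by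
          rw [Finset.sum_range_succ']
          simp
        have e2 : ∑ k ∈ Finset.range (d+1), (M j) ^ k = Q + 1 := by
          rw [Finset.sum_range_succ, hper j, hQ]
        rw [e0]
        have := e1.symm.trans e2
        exact add_right_cancel this
      have hkQ : ∀ k : ℕ, (M j) ^ k * Q = Q := by
        intro k
        induction k with
        | zero => rw [pow_zero, one_mul]
        | succ k ih => rw [pow_succ, mul_assoc, hMQ, ih]
      have hQQ : Q * Q = (d:ℚ) • Q := by
        rw [hQ, Finset.sum_mul]
        have : ∀ k ∈ Finset.range d, (M j) ^ k * Q = Q := fun k _ => hkQ k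
        rw [Finset.sum_congr rfl fun k hk => hkQ k]
        rw [Finset.sum_const, Finset.card_range, ← Nat.cast_smul_eq_nsmul ℚ]
      rw [smul_mul_assoc, mul_smul_comm, hQQ, smul_smul, smul_smul]
      congr 1
      field_simp
    choose r hrr using key
    exact ⟨r, hrr⟩
  have htrQ : ∀ j, (∑ k ∈ Finset.range d, (M j) ^ k).trace = (d:ℚ) * r j := by
    intro j
    have := hr j
    rw [Matrix.trace_smul, smul_eq_mul] at this
    field_simp at this ⊢
    linarith [this]
  set z : ℤ := ∑ j : Fin N, (-1 : ℤ) ^ (j : ℕ) * (r j : ℤ) with hzdef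
  have hdz : (d:ℤ) * z = χ := by
    have hQtraces : ∑ j : Fin N, (-1:ℚ) ^ (j:ℕ) * (∑ k ∈ Finset.range d, (M j) ^ k).trace
        = (χ:ℚ) := by
      have swap1 : ∑ j : Fin N, (-1:ℚ) ^ (j:ℕ) * (∑ k ∈ Finset.range d, (M j) ^ k).trace
          = ∑ k ∈ Finset.range d, ∑ j : Fin N, (-1:ℚ) ^ (j:ℕ) * ((M j) ^ k).trace := by
        rw [Finset.sum_comm]
        refine Finset.sum_congr rfl fun j _ => ?_
        rw [Matrix.trace_sum, Finset.mul_sum]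
      rw [swap1]
      rw [Finset.sum_eq_single 0]
      · simp only [pow_zero]
        have : ∀ j : Fin N, ((1 : Matrix (Fin (m j)) (Fin (m j)) ℚ)).trace = (m j : ℚ) := by
          intro j; rw [Matrix.trace_one]; simp
        simp_rw [this]
        exact_mod_cast congrArg (fun x : ℤ => (x : ℚ)) hchi
      · intro k hk hk0
        exact hlef k (Nat.pos_of_ne_zero hk0) (Finset.mem_range.mp hk)
      · intro h0
        exact absurd (Finset.mem_range.mpr hd) h0
    have h2 : ∑ j : Fin N, (-1:ℚ) ^ (j:ℕ) * (∑ k ∈ Finset.range d, (M j) ^ k).trace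
        = (d:ℚ) * ∑ j : Fin N, (-1:ℚ) ^ (j:ℕ) * (r j : ℚ) := by
      simp_rw [htrQ]
      rw [Finset.mul_sum]
      exact Finset.sum_congr rfl fun j _ => by ring
    rw [h2] at hQtraces
    have hzQ : ((z:ℤ):ℚ) = ∑ j : Fin N, (-1:ℚ) ^ (j:ℕ) * (r j : ℚ) := by
      rw [hzdef]
      push_cast
      rfl
    have hgoal : ((d:ℕ):ℚ) * ((z:ℤ):ℚ) = ((χ:ℤ):ℚ) := by rw [hzQ]; exact hQtraces
    exact_mod_cast hgoal
  have he : χ / d = z := by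
    rw [← hdz, Int.mul_ediv_cancel_left _ (by exact_mod_cast hd.ne' : (d:ℤ) ≠ 0)]
  -- signed sum of T
  have hT : ∑ j : Fin N, (-1:ℚ[X]) ^ (j:ℕ) * T j
      = Polynomial.C (χ:ℚ) * Polynomial.X ^ (d-1) := by
    have expand : ∀ j : Fin N, (-1:ℚ[X]) ^ (j:ℕ) * T j
        = ∑ k ∈ Finset.range d,
            Polynomial.C ((-1:ℚ) ^ (j:ℕ) * ((M j) ^ (k+1)).trace) * Polynomial.X ^ k := by
      intro j
      rw [hTdef, Finset.mul_sum]
      refine Finset.sum_congr rfl fun k _ => ?_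
      simp only [_root_.map_mul, map_pow, map_neg, _root_.map_one]
      ring
    simp_rw [expand]
    rw [Finset.sum_comm]
    have inner : ∀ k ∈ Finset.range d,
        (∑ j : Fin N, Polynomial.C ((-1:ℚ) ^ (j:ℕ) * ((M j) ^ (k+1)).trace) * Polynomial.X ^ k)
        = Polynomial.C (∑ j : Fin N, (-1:ℚ) ^ (j:ℕ) * ((M j) ^ (k+1)).trace) * Polynomial.X ^ k := by
      intro k _
      rw [map_sum, Finset.sum_mul]
    rw [Finset.sum_congr rfl inner]
    rw [Finset.sum_eq_single (d-1)]
    · have : d - 1 + 1 = d := Nat.succ_pred_eq_of_pos hd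
      rw [this, hLd]
    · intro k hk hkd
      have hkd' : k + 1 < d := by
        have := Finset.mem_range.mp hk
        omega
      rw [hlef (k+1) (Nat.succ_pos k) hkd', map_zero, zero_mul]
    · intro h0
      exact absurd (Finset.mem_range.mpr (by omega)) h0
  -- split odd and even
  set Sev : Finset (Fin N) := Finset.univ.filter (fun j : Fin N => Even (j:ℕ)) with hSev
  set So : Finset (Fin N) := Finset.univ.filter (fun j : Fin N => ¬ Even (j:ℕ)) with hSo
  set A : ℚ[X] := ∏ j ∈ So, D j with hAdef
  set B : ℚ[X] := ∏ j ∈ Sev, D j with hBdef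
  set TA : ℚ[X] := ∑ j ∈ So, T j with hTAdef
  set TB : ℚ[X] := ∑ j ∈ Sev, T j with hTBdef
  have hTBA : TB - TA = Polynomial.C (χ:ℚ) * Polynomial.X ^ (d-1) := by
    have hsplit := Finset.sum_filter_add_sum_filter_not Finset.univ
      (fun j : Fin N => Even (j:ℕ)) (fun j => (-1:ℚ[X]) ^ (j:ℕ) * T j)
    have hev : ∑ j ∈ Sev, (-1:ℚ[X]) ^ (j:ℕ) * T j = TB := by
      refine Finset.sum_congr rfl fun j hj => ?_
      have hEv : Even (j:ℕ) := (Finset.mem_filter.mp hj).2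
      rw [hEv.neg_one_pow, one_mul]
    have hod : ∑ j ∈ So, (-1:ℚ[X]) ^ (j:ℕ) * T j = -TA := by
      rw [hTAdef, ← Finset.sum_neg_distrib]
      refine Finset.sum_congr rfl fun j hj => ?_
      have hOd : Odd (j:ℕ) := Nat.not_even_iff_odd.mp (Finset.mem_filter.mp hj).2
      rw [hOd.neg_one_pow, neg_one_mul]
    rw [hev, hod] at hsplit
    rw [← hT, ← hsplit]
    ring
  set a : ℕ := z.toNat with hadef
  set b : ℕ := (-z).toNat with hbdef
  have hab : (a:ℤ) - (b:ℤ) = z := by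
    rw [hadef, hbdef]
    omega
  set P : ℚ[X] := A * G ^ a with hPdef
  set Q : ℚ[X] := B * G ^ b with hQdef
  have hGA : G * Polynomial.derivative A = -(A * TA) :=
    deriv_prod_rel So G D T (fun i _ => hkey i)
  have hGB : G * Polynomial.derivative B = -(B * TB) :=
    deriv_prod_rel Sev G D T (fun i _ => hkey i)
  have hGpow : ∀ c : ℕ, G * Polynomial.derivative (G ^ c) = (c : ℚ[X]) * Polynomial.derivative G * G ^ c := by
    intro c
    cases c with
    | zero => simp
    | succ c =>
      rw [Polynomial.derivative_pow, Nat.succ_sub_one, pow_succ, Polynomial.C_eq_natCast]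
      ring
  have hGP : G * Polynomial.derivative P = ((a:ℚ[X]) * Polynomial.derivative G - TA) * P := by
    rw [hPdef, Polynomial.derivative_mul]
    calc G * (Polynomial.derivative A * G ^ a + A * Polynomial.derivative (G ^ a))
        = (G * Polynomial.derivative A) * G ^ a + A * (G * Polynomial.derivative (G ^ a)) := by ring
      _ = (-(A * TA)) * G ^ a + A * ((a:ℚ[X]) * Polynomial.derivative G * G ^ a) := by rw [hGA, hGpow]
      _ = ((a:ℚ[X]) * Polynomial.derivative G - TA) * (A * G ^ a) := by ring
  have hGQ : G * Polynomial.derivative Q = ((b:ℚ[X]) * Polynomial.derivative G - TB) * Q := by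
    rw [hQdef, Polynomial.derivative_mul]
    calc G * (Polynomial.derivative B * G ^ b + B * Polynomial.derivative (G ^ b))
        = (G * Polynomial.derivative B) * G ^ b + B * (G * Polynomial.derivative (G ^ b)) := by ring
      _ = (-(B * TB)) * G ^ b + B * ((b:ℚ[X]) * Polynomial.derivative G * G ^ b) := by rw [hGB, hGpow]
      _ = ((b:ℚ[X]) * Polynomial.derivative G - TB) * (B * G ^ b) := by ring
  have hzero : ((a:ℚ[X]) - (b:ℚ[X])) * Polynomial.derivative G + (TB - TA) = 0 := by
    rw [hTBA, hGdef]
    rw [Polynomial.derivative_sub, Polynomial.derivative_one, Polynomial.derivative_X_pow, zero_sub]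
    have h1 : ((a:ℚ[X]) - (b:ℚ[X])) = Polynomial.C ((z:ℚ)) := by
      rw [← Polynomial.C_eq_natCast, ← Polynomial.C_eq_natCast, ← map_sub]
      congr 1
      exact_mod_cast hab
    rw [h1]
    have h2 : (χ:ℚ) = (d:ℚ) * (z:ℚ) := by exact_mod_cast hdz.symm
    rw [h2, Polynomial.C_mul]
    ring
  have hGe : G.eval 0 = 1 := by
    rw [hGdef]
    simp [zero_pow hd.ne']
  have hGne : G ≠ 0 := by
    intro h
    rw [h] at hGe
    simp at hGe
  have hcross : Polynomial.derivative P * Q = P * Polynomial.derivative Q := by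
    have hmain : G * (Polynomial.derivative P * Q - P * Polynomial.derivative Q) = 0 := by
      have step : G * (Polynomial.derivative P * Q - P * Polynomial.derivative Q)
          = (G * Polynomial.derivative P) * Q - P * (G * Polynomial.derivative Q) := by ring
      rw [step, hGP, hGQ]
      calc ((a:ℚ[X]) * Polynomial.derivative G - TA) * P * Q - P * (((b:ℚ[X]) * Polynomial.derivative G - TB) * Q)
          = (((a:ℚ[X]) - (b:ℚ[X])) * Polynomial.derivative G + (TB - TA)) * (P * Q) := by ring
        _ = 0 := by rw [hzero, zero_mul]
    have := mul_eq_zero.mp hmain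
    rcases this with h | h
    · exact absurd h hGne
    · exact sub_eq_zero.mp h
  have hDe : ∀ j, (D j).eval 0 = 1 := by
    intro j
    rw [hDdef]
    have heval : Polynomial.eval 0 (Matrix.det (1 - (M j).map fun a => Polynomial.X * Polynomial.C a))
        = Matrix.det (((1 : Matrix (Fin (m j)) (Fin (m j)) ℚ[X])
            - (M j).map fun a => Polynomial.X * Polynomial.C a).map (Polynomial.evalRingHom 0)) := by
      rw [← Polynomial.coe_evalRingHom, RingHom.map_det, RingHom.mapMatrix_apply]
    rw [heval]
    have hmat : (((1 : Matrix (Fin (m j)) (Fin (m j)) ℚ[X])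
        - (M j).map fun a => Polynomial.X * Polynomial.C a).map (Polynomial.evalRingHom 0))
        = 1 := by
      ext i k
      simp [Matrix.map_apply, Matrix.sub_apply, Matrix.one_apply, apply_ite (Polynomial.eval (0:ℚ)),
        Polynomial.eval_one, Polynomial.eval_zero]
    rw [hmat, Matrix.det_one]
  have hAe : A.eval 0 = 1 := by
    rw [hAdef, Polynomial.eval_prod]
    simp_rw [hDe]
    exact Finset.prod_const_one
  have hBe : B.eval 0 = 1 := by
    rw [hBdef, Polynomial.eval_prod]
    simp_rw [hDe]
    exact Finset.prod_const_one
  have hP0 : P.coeff 0 = 1 := by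
    rw [Polynomial.coeff_zero_eq_eval_zero, hPdef, Polynomial.eval_mul, Polynomial.eval_pow,
      hAe, hGe, one_mul, one_pow]
  have hQ0 : Q.coeff 0 = 1 := by
    rw [Polynomial.coeff_zero_eq_eval_zero, hQdef, Polynomial.eval_mul, Polynomial.eval_pow,
      hBe, hGe, one_mul, one_pow]
  have hPQ : P = Q := eq_of_cross_deriv P Q hP0 hQ0 hcross
  -- pass to RatFunc
  set φ : ℚ[X] →+* RatFunc ℚ := (algebraMap ℚ[X] (RatFunc ℚ) : ℚ[X] →+* RatFunc ℚ) with hφdef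
  have hφinj : Function.Injective φ := RatFunc.algebraMap_injective ℚ
  have hbase : ∀ j, Matrix.det (1 - (M j).map fun aa =>
      (RatFunc.X : RatFunc ℚ) * algebraMap ℚ (RatFunc ℚ) aa) = φ (D j) := by
    intro j
    rw [hDdef]
    rw [RingHom.map_det, RingHom.mapMatrix_apply]
    congr 1
    ext i k
    simp only [Matrix.map_apply, Matrix.sub_apply, Matrix.one_apply, apply_ite φ,
      map_sub, _root_.map_mul, _root_.map_one, _root_.map_zero]
    simp [φ]
  have hGφ : (1 : RatFunc ℚ) - (RatFunc.X : RatFunc ℚ) ^ d = φ G := by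
    rw [hGdef, map_sub, _root_.map_one, map_pow]
    rfl
  have hφGne : φ G ≠ 0 := fun h => hGne (hφinj (h.trans (map_zero φ).symm))
  have hBne : B ≠ 0 := by
    intro h
    rw [h] at hBe
    simp at hBe
  have hφBne : φ B ≠ 0 := fun h => hBne (hφinj (h.trans (map_zero φ).symm))
  have hEq : φ A * φ G ^ a = φ B * φ G ^ b := by
    have := congrArg φ hPQ
    rw [hPdef, hQdef, _root_.map_mul, _root_.map_mul, map_pow, map_pow] at this
    exact this
  have hprod : (∏ j : Fin N, (Matrix.det (1 - (M j).map (fun aa =>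
      (RatFunc.X : RatFunc ℚ) * algebraMap ℚ (RatFunc ℚ) aa))) ^ ((-1 : ℤ) ^ ((j : ℕ) + 1)))
      = (φ B)⁻¹ * φ A := by
    rw [← Finset.prod_filter_mul_prod_filter_not Finset.univ (fun j : Fin N => Even (j:ℕ))
      (fun j => (Matrix.det (1 - (M j).map (fun aa =>
        (RatFunc.X : RatFunc ℚ) * algebraMap ℚ (RatFunc ℚ) aa))) ^ ((-1 : ℤ) ^ ((j : ℕ) + 1)))]
    congr 1
    · have : ∀ j ∈ Sev, (Matrix.det (1 - (M j).map (fun aa =>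
          (RatFunc.X : RatFunc ℚ) * algebraMap ℚ (RatFunc ℚ) aa))) ^ ((-1 : ℤ) ^ ((j : ℕ) + 1))
          = (φ (D j))⁻¹ := by
        intro j hj
        have hEv : Even (j:ℕ) := (Finset.mem_filter.mp hj).2
        rw [hbase j, (hEv.add_one).neg_one_pow, _root_.zpow_neg_one]
      rw [Finset.prod_congr rfl this, Finset.prod_inv_distrib, ← map_prod]
    · have : ∀ j ∈ So, (Matrix.det (1 - (M j).map (fun aa =>
          (RatFunc.X : RatFunc ℚ) * algebraMap ℚ (RatFunc ℚ) aa))) ^ ((-1 : ℤ) ^ ((j : ℕ) + 1))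
          = φ (D j) := by
        intro j hj
        have hOd : Odd (j:ℕ) := Nat.not_even_iff_odd.mp (Finset.mem_filter.mp hj).2
        rw [hbase j, (hOd.add_one).neg_one_pow, zpow_one]
      rw [Finset.prod_congr rfl this, ← map_prod]
  rw [hprod, he]
  have hexp : (-z : ℤ) = (b:ℤ) - (a:ℤ) := by omega
  rw [hGφ, hexp, zpow_sub₀ hφGne, zpow_natCast, zpow_natCast]
  rw [div_eq_mul_inv]
  field_simp
  linear_combination hEq
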